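/- For any operators S and T on a finite-dimensional Hilbert space with 0 ≤ S ≤ I and T ≥ 0, and any real c > 0, the operator inequality I − (S+T)^{−1/2} S (S+T)^{−1/2} ≤ (1+c)(I−S) + (2+c+c^{−1}) T holds (where the inverse square root is taken on the support of S+T). -/

import Mathlib

open Matrix Kronecker BigOperators ComplexOrder

/-- The positive semidefinite square root of a positive semidefinite matrix
(definition of the older Mathlib, since removed). -/
noncomputable def Matrix.PosSemidef.sqrt {n 𝕜 : Type*} [Fintype n] [DecidableEq n] [RCLike 𝕜]
    {A : Matrix n n 𝕜} (hA : A.PosSemidef) : Matrix n n 𝕜 :=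
  hA.1.eigenvectorUnitary.1 * diagonal ((↑) ∘ (fun x => Real.sqrt x) ∘ hA.1.eigenvalues) *
    (star hA.1.eigenvectorUnitary : Matrix n n 𝕜)

noncomputable def traceNorm {n : Type*} [Fintype n] [DecidableEq n] (A : Matrix n n ℂ) : ℝ :=
  ((Matrix.posSemidef_conjTranspose_mul_self A).sqrt).trace.re

noncomputable def vNEntropy {n : Type*} [Fintype n] [DecidableEq n] (M : Matrix n n ℂ) : ℝ :=
  if h : M.IsHermitian then -∑ i, (h.eigenvalues i) * Real.logb 2 (h.eigenvalues i) else 0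

open scoped Classical in
noncomputable def fidelity {n : Type*} [Fintype n] [DecidableEq n] (A B : Matrix n n ℂ) : ℝ :=
  if h : A.PosSemidef ∧ B.PosSemidef then (traceNorm (h.1.sqrt * h.2.sqrt))^2 else 0

noncomputable def Dmin {n : Type*} [Fintype n] [DecidableEq n] (A B : Matrix n n ℂ) : ℝ :=
  - Real.logb 2 (fidelity A B)

noncomputable def Dmax {n : Type*} [Fintype n] [DecidableEq n] (A B : Matrix n n ℂ) : EReal :=
  ⨅ l ∈ {l : ℝ | ((((2:ℝ)^l : ℝ) : ℂ) • B - A).PosSemidef}, (l : EReal)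

noncomputable def traceSnd {x y : Type*} [Fintype y] (M : Matrix (x × y) (x × y) ℂ) :
    Matrix x x ℂ := Matrix.of fun i j => ∑ k, M (i,k) (j,k)

noncomputable def traceFst {x y : Type*} [Fintype x] (M : Matrix (x × y) (x × y) ℂ) :
    Matrix y y ℂ := Matrix.of fun i j => ∑ k, M (k,i) (k,j)

noncomputable def mutInfo {x y : Type*} [Fintype x] [Fintype y] [DecidableEq x] [DecidableEq y]
    (M : Matrix (x × y) (x × y) ℂ) : ℝ :=
  vNEntropy (traceSnd M) + vNEntropy (traceFst M) - vNEntropy M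

def blockApply {r a b : Type*} (Φ : Matrix a a ℂ →ₗ[ℂ] Matrix b b ℂ)
    (M : Matrix (r × a) (r × a) ℂ) : Matrix (r × b) (r × b) ℂ :=
  Matrix.of fun x y => Φ (Matrix.of fun s t => M (x.1, s) (y.1, t)) x.2 y.2

structure QChannel (a b : Type*) [Fintype a] [DecidableEq a] [Fintype b] [DecidableEq b] where
  map : Matrix a a ℂ →ₗ[ℂ] Matrix b b ℂ
  trace_preserving : ∀ M : Matrix a a ℂ, (map M).trace = M.trace
  completely_pos : ∀ (n : ℕ) (M : Matrix (Fin n × a) (Fin n × a) ℂ),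
    M.PosSemidef → (blockApply map M).PosSemidef

noncomputable def IRB {r b e : Type*} [Fintype r] [Fintype b] [Fintype e]
    [DecidableEq r] [DecidableEq b] [DecidableEq e]
    (ω : Matrix (r × (b × e)) (r × (b × e)) ℂ) : ℝ :=
  mutInfo (Matrix.of fun (p q : r × b) => ∑ y : e, ω (p.1, (p.2, y)) (q.1, (q.2, y)))

noncomputable def IRE {r b e : Type*} [Fintype r] [Fintype b] [Fintype e]
    [DecidableEq r] [DecidableEq b] [DecidableEq e]
    (ω : Matrix (r × (b × e)) (r × (b × e)) ℂ) : ℝ :=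
  mutInfo (Matrix.of fun (p q : r × e) => ∑ x : b, ω (p.1, (x, p.2)) (q.1, (x, q.2)))


noncomputable def pinvSqrt {n : Type*} [Fintype n] [DecidableEq n] {A : Matrix n n ℂ}
    (hA : A.IsHermitian) : Matrix n n ℂ :=
  (hA.eigenvectorUnitary : Matrix n n ℂ)
    * Matrix.diagonal (fun i => (((Real.sqrt (hA.eigenvalues i))⁻¹ : ℝ) : ℂ))
    * (star (hA.eigenvectorUnitary : Matrix n n ℂ))

namespace Matrix.PosSemidef

lemma posSemidef_sqrt {n : Type*} [Fintype n] [DecidableEq n] {A : Matrix n n ℂ}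
    (hA : A.PosSemidef) : hA.sqrt.PosSemidef := by
  have hD : (diagonal ((↑) ∘ (fun x => Real.sqrt x) ∘ hA.1.eigenvalues : n → ℂ)).PosSemidef :=
    posSemidef_diagonal_iff.mpr fun i => by
      simp only [Function.comp_apply]; exact_mod_cast Real.sqrt_nonneg _
  simpa [Matrix.PosSemidef.sqrt, Matrix.star_eq_conjTranspose] using
    hD.mul_mul_conjTranspose_same (hA.1.eigenvectorUnitary : Matrix n n ℂ)

lemma sqrt_mul_self {n : Type*} [Fintype n] [DecidableEq n] {A : Matrix n n ℂ}
    (hA : A.PosSemidef) : hA.sqrt * hA.sqrt = A := by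
  have hU : star (hA.1.eigenvectorUnitary : Matrix n n ℂ) * (hA.1.eigenvectorUnitary : Matrix n n ℂ)
      = 1 := Unitary.coe_star_mul_self _
  have hsp := hA.1.spectral_theorem
  rw [Unitary.conjStarAlgAut_apply] at hsp
  conv_rhs => rw [hsp]
  simp only [Matrix.PosSemidef.sqrt, mul_assoc]
  rw [← mul_assoc (star _) (hA.1.eigenvectorUnitary : Matrix n n ℂ), hU, one_mul,
    ← mul_assoc (diagonal _) (diagonal _), diagonal_mul_diagonal]
  congr 3
  funext i
  simp only [Function.comp_apply, ← RCLike.ofReal_mul, Real.mul_self_sqrt (hA.eigenvalues_nonneg i)]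

end Matrix.PosSemidef

section HNAux

open Matrix

variable {n : Type*} [Fintype n] [DecidableEq n]

private lemma hn_smul_psd {A : Matrix n n ℂ} (hA : A.PosSemidef) {r : ℝ} (hr : 0 ≤ r) :
    ((r : ℂ) • A).PosSemidef := by
  refine posSemidef_iff_dotProduct_mulVec.mpr ⟨?_, fun x => ?_⟩
  · show ((r : ℂ) • A)ᴴ = (r : ℂ) • A
    rw [Matrix.conjTranspose_smul, hA.1.eq]
    simp [Complex.star_def, Complex.conj_ofReal]
  · rw [Matrix.smul_mulVec, dotProduct_smul, smul_eq_mul]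
    exact mul_nonneg (by exact_mod_cast hr) (hA.dotProduct_mulVec_nonneg x)

end HNAux

/-- Hayashi–Nagaoka operator inequality. -/
theorem hayashi_nagaoka {n : Type*} [Fintype n] [DecidableEq n]
    (S T : Matrix n n ℂ) (hS : S.PosSemidef) (hS1 : ((1 : Matrix n n ℂ) - S).PosSemidef)
    (hT : T.PosSemidef) (c : ℝ) (hc : 0 < c) :
    (((1 + c : ℝ) : ℂ) • ((1 : Matrix n n ℂ) - S) + ((2 + c + c⁻¹ : ℝ) : ℂ) • T
      - ((1 : Matrix n n ℂ)
          - pinvSqrt (hS.1.add hT.1) * S * pinvSqrt (hS.1.add hT.1))).PosSemidef := by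
  classical
  have hMpsd : (S + T).PosSemidef := hS.add hT
  have hMh : (S + T).IsHermitian := hS.1.add hT.1
  set g : n → ℝ := hMh.eigenvalues with hgdef
  set U : Matrix n n ℂ := (hMh.eigenvectorUnitary : Matrix n n ℂ) with hUdef
  have hg0 : ∀ i, 0 ≤ g i := fun i => hMpsd.eigenvalues_nonneg i
  have hUU : star U * U = 1 := by
    rw [hUdef]; exact Unitary.coe_star_mul_self hMh.eigenvectorUnitary
  have hUU' : U * star U = 1 := by
    rw [hUdef]; exact Unitary.coe_mul_star_self hMh.eigenvectorUnitary
  -- conjugation helper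
  have mulcj : ∀ f h : n → ℝ,
      (U * diagonal (fun i => (f i : ℂ)) * star U) * (U * diagonal (fun i => (h i : ℂ)) * star U)
        = U * diagonal (fun i => ((f i * h i : ℝ) : ℂ)) * star U := by
    intro f h
    have key : ∀ X : Matrix n n ℂ, star U * (U * X) = X := fun X => by
      rw [← mul_assoc, hUU, one_mul]
    simp only [mul_assoc, key]
    rw [← mul_assoc (diagonal fun i => (f i : ℂ)), diagonal_mul_diagonal]
    push_cast
    rfl
  have hermcj : ∀ f : n → ℝ, (U * diagonal (fun i => (f i : ℂ)) * star U).IsHermitian := by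
    intro f
    have hD : (diagonal (fun i => (f i : ℂ))).IsHermitian :=
      isHermitian_diagonal_of_self_adjoint _ (funext fun i => by
        simp [Pi.star_apply, Complex.star_def, Complex.conj_ofReal])
    simpa [Matrix.star_eq_conjTranspose] using Matrix.isHermitian_mul_mul_conjTranspose U hD
  have psdcj : ∀ f : n → ℝ, (∀ i, 0 ≤ f i) →
      (U * diagonal (fun i => (f i : ℂ)) * star U).PosSemidef := by
    intro f hf
    have hD : (diagonal (fun i => (f i : ℂ))).PosSemidef :=
      posSemidef_diagonal_iff.mpr fun i => by exact_mod_cast hf i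
    simpa [Matrix.star_eq_conjTranspose] using hD.mul_mul_conjTranspose_same U
  have cgr : ∀ f h : n → ℝ, (∀ i, f i = h i) →
      (U * diagonal (fun i => (f i : ℂ)) * star U) = (U * diagonal (fun i => (h i : ℂ)) * star U) := by
    intro f h hfh
    have : (fun i => (f i : ℂ)) = (fun i => (h i : ℂ)) := funext fun i => by rw [hfh i]
    rw [this]
  -- spectral theorem
  have hMspec : S + T = U * diagonal (fun i => (g i : ℂ)) * star U := by
    rw [hgdef, hUdef]
    have hsp := hMh.spectral_theorem
    rw [Unitary.conjStarAlgAut_apply] at hsp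
    exact hsp
  -- named matrices
  set P : Matrix n n ℂ := pinvSqrt (hS.1.add hT.1) with hPdef
  have hPeq : P = U * diagonal (fun i => (((Real.sqrt (g i))⁻¹ : ℝ) : ℂ)) * star U := by
    rw [hPdef, hgdef, hUdef]; rfl
  set Pi2 : Matrix n n ℂ :=
    U * diagonal (fun i => ((if g i = 0 then (0:ℝ) else 1 : ℝ) : ℂ)) * star U with hPidef
  set R : Matrix n n ℂ := U * diagonal (fun i => ((Real.sqrt (g i) : ℝ) : ℂ)) * star U with hRdef
  have hPherm : P.IsHermitian := by rw [hPeq]; exact hermcj _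
  have hPiherm : Pi2.IsHermitian := by rw [hPidef]; exact hermcj _
  have hRpsd : R.PosSemidef := by rw [hRdef]; exact psdcj _ fun i => Real.sqrt_nonneg _
  have hRherm : R.IsHermitian := hRpsd.1
  -- products
  have hPM : P * (S + T) = R := by
    rw [hPeq, hMspec, mulcj, hRdef]
    refine cgr _ _ fun i => ?_
    by_cases h0 : g i = 0
    · simp [h0]
    · have hpos : 0 < g i := (hg0 i).lt_of_ne (Ne.symm h0)
      have hs : 0 < Real.sqrt (g i) := Real.sqrt_pos.mpr hpos
      field_simp
      exact (Real.sq_sqrt (hg0 i)).symm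
  have hMP : (S + T) * P = R := by
    rw [hPeq, hMspec, mulcj, hRdef]
    refine cgr _ _ fun i => ?_
    by_cases h0 : g i = 0
    · simp [h0]
    · have hpos : 0 < g i := (hg0 i).lt_of_ne (Ne.symm h0)
      have hs : 0 < Real.sqrt (g i) := Real.sqrt_pos.mpr hpos
      field_simp
      exact (Real.sq_sqrt (hg0 i)).symm
  have hRP : R * P = Pi2 := by
    rw [hPeq, hRdef, mulcj, hPidef]
    refine cgr _ _ fun i => ?_
    by_cases h0 : g i = 0
    · simp [h0]
    · have hpos : 0 < g i := (hg0 i).lt_of_ne (Ne.symm h0)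
      have hs : 0 < Real.sqrt (g i) := Real.sqrt_pos.mpr hpos
      simp [h0, mul_inv_cancel₀ hs.ne']
  have hPMP : P * (S + T) * P = Pi2 := by rw [hPM, hRP]
  have hRR : R * R = S + T := by
    rw [hRdef, mulcj, hMspec]
    exact cgr _ _ fun i => Real.mul_self_sqrt (hg0 i)
  have hMPi : (S + T) * Pi2 = S + T := by
    rw [hMspec, hPidef, mulcj]
    refine cgr _ _ fun i => ?_
    by_cases h0 : g i = 0 <;> simp [h0]
  have hPiM : Pi2 * (S + T) = S + T := by
    rw [hMspec, hPidef, mulcj]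
    refine cgr _ _ fun i => ?_
    by_cases h0 : g i = 0 <;> simp [h0]
  -- support facts
  have hQherm : ((1 : Matrix n n ℂ) - Pi2).IsHermitian := isHermitian_one.sub hPiherm
  have supp : ∀ (A : Matrix n n ℂ) (hA : A.PosSemidef) (hB : (S + T - A).PosSemidef),
      A * Pi2 = A ∧ Pi2 * A = A := by
    intro A hA hB
    have hMQ : ((1 : Matrix n n ℂ) - Pi2) * (S + T) = 0 := by
      rw [sub_mul, one_mul, hPiM, sub_self]
    set Q : Matrix n n ℂ := (1 : Matrix n n ℂ) - Pi2 with hQd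
    set X : Matrix n n ℂ := hA.sqrt * Q with hXd
    set Y : Matrix n n ℂ := hB.sqrt * Q with hYd
    have hXX : Xᴴ * X = Q * A * Q := by
      rw [hXd, conjTranspose_mul, hQherm.eq, hA.posSemidef_sqrt.1.eq]
      rw [mul_assoc, ← mul_assoc hA.sqrt, hA.sqrt_mul_self, ← mul_assoc]
    have hYY : Yᴴ * Y = Q * (S + T - A) * Q := by
      rw [hYd, conjTranspose_mul, hQherm.eq, hB.posSemidef_sqrt.1.eq]
      rw [mul_assoc, ← mul_assoc hB.sqrt, hB.sqrt_mul_self, ← mul_assoc]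
    have hsum : Xᴴ * X + Yᴴ * Y = 0 := by
      rw [hXX, hYY, ← add_mul, ← mul_add]
      have : A + (S + T - A) = S + T := by abel
      rw [this, hMQ, zero_mul]
    have hXv : ∀ v, X *ᵥ v = 0 := by
      intro v
      have h1 : (0:ℂ) ≤ star v ⬝ᵥ ((Xᴴ * X) *ᵥ v) := (posSemidef_conjTranspose_mul_self X).dotProduct_mulVec_nonneg v
      have h2 : (0:ℂ) ≤ star v ⬝ᵥ ((Yᴴ * Y) *ᵥ v) := (posSemidef_conjTranspose_mul_self Y).dotProduct_mulVec_nonneg v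
      have h3 : star v ⬝ᵥ ((Xᴴ * X) *ᵥ v) + star v ⬝ᵥ ((Yᴴ * Y) *ᵥ v) = 0 := by
        have := congrArg (fun B : Matrix n n ℂ => star v ⬝ᵥ (B *ᵥ v)) hsum
        simpa [Matrix.add_mulVec, dotProduct_add] using this
      have h4 : star v ⬝ᵥ ((Xᴴ * X) *ᵥ v) = 0 := by
        have hle : star v ⬝ᵥ ((Xᴴ * X) *ᵥ v) ≤ 0 := by
          rw [eq_neg_of_add_eq_zero_left h3]
          exact neg_nonpos.mpr h2
        exact le_antisymm hle h1
      have h5 : star (X *ᵥ v) ⬝ᵥ (X *ᵥ v) = 0 := by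
        calc star (X *ᵥ v) ⬝ᵥ (X *ᵥ v) = (star v ᵥ* Xᴴ) ⬝ᵥ (X *ᵥ v) := by
              rw [Matrix.star_mulVec]
          _ = star v ⬝ᵥ (Xᴴ *ᵥ (X *ᵥ v)) := (Matrix.dotProduct_mulVec _ _ _).symm
          _ = star v ⬝ᵥ ((Xᴴ * X) *ᵥ v) := by rw [Matrix.mulVec_mulVec]
          _ = 0 := h4
      exact dotProduct_star_self_eq_zero.mp h5
    have hX0 : X = 0 := by
      ext i j
      have := congrFun (hXv (Pi.single j 1)) i
      simpa [Matrix.mulVec_single] using this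
    have hAQ : A * Q = 0 := by
      have h6 : hA.sqrt * X = A * Q := by rw [hXd, ← mul_assoc, hA.sqrt_mul_self]
      rw [← h6, hX0, mul_zero]
    have hAPi : A * Pi2 = A := by
      have := hAQ
      rw [hQd, mul_sub, mul_one] at this
      exact (sub_eq_zero.mp this).symm
    refine ⟨hAPi, ?_⟩
    have := congrArg Matrix.conjTranspose hAPi
    rwa [conjTranspose_mul, hPiherm.eq, hA.1.eq] at this
  obtain ⟨hSPi, hPiS⟩ := supp S hS (by simpa using hT)
  obtain ⟨hTPi, hPiT⟩ := supp T hT (by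
    have : S + T - T = S := by abel
    rw [this]; exact hS)
  -- S*S ≤ S + T
  have hsSsq : hS.sqrt * S * hS.sqrt = S * S := by
    set s : Matrix n n ℂ := hS.sqrt with hsd
    have h : s * s = S := hS.sqrt_mul_self
    rw [← h]
    simp only [mul_assoc]
  have hMS2 : (S + T - S * S).PosSemidef := by
    have hss : hS.sqrt * ((1 : Matrix n n ℂ) - S) * (hS.sqrt)ᴴ = S - S * S := by
      rw [hS.posSemidef_sqrt.1.eq, mul_sub, mul_one, sub_mul, hS.sqrt_mul_self, hsSsq]
    have h1 : (S - S * S).PosSemidef := hss ▸ hS1.mul_mul_conjTranspose_same hS.sqrt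
    have h2 : S + T - S * S = (S - S * S) + T := by abel
    rw [h2]; exact h1.add hT
  -- R - S is PSD
  have hRS : (R - S).PosSemidef := by
    have hA : (R - S).IsHermitian := hRherm.sub hS.1
    refine hA.posSemidef_iff_eigenvalues_nonneg.mpr fun i => show (0:ℝ) ≤ hA.eigenvalues i from ?_
    by_contra hneg
    push_neg at hneg
    set mu : ℝ := hA.eigenvalues i with hmudef
    set v : n → ℂ := ⇑(hA.eigenvectorBasis i) with hvdef
    have hv : (R - S) *ᵥ v = (mu : ℂ) • v := by
      have h1 := hA.mulVec_eigenvectorBasis i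
      have hcast : (mu : ℂ) • v = mu • v := by
        funext j; simp [Pi.smul_apply, Complex.real_smul]
      rw [hcast]; exact h1
    have hvne : v ≠ 0 := by
      intro h0
      exact hA.eigenvectorBasis.orthonormal.ne_zero i (by ext j; exact congrFun h0 j)
    have hnu : (0:ℂ) < star v ⬝ᵥ v := by
      refine lt_of_le_of_ne (dotProduct_star_self_nonneg v) ?_
      intro h
      exact hvne (dotProduct_star_self_eq_zero.mp h.symm)
    set u : n → ℂ := R *ᵥ v with hudef
    have hSv : S *ᵥ v = u - (mu : ℂ) • v := by
      have h1 : R *ᵥ v - S *ᵥ v = (mu : ℂ) • v := by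
        rw [← Matrix.sub_mulVec]; exact hv
      rw [sub_eq_iff_eq_add] at h1
      rw [hudef, h1]; abel
    have formSS : star v ⬝ᵥ ((S * S) *ᵥ v) = star (S *ᵥ v) ⬝ᵥ (S *ᵥ v) := by
      rw [← Matrix.mulVec_mulVec, Matrix.dotProduct_mulVec, Matrix.star_mulVec, hS.1.eq]
    have formRR : star v ⬝ᵥ ((S + T) *ᵥ v) = star u ⬝ᵥ u := by
      rw [← hRR, ← Matrix.mulVec_mulVec, Matrix.dotProduct_mulVec, Matrix.star_mulVec, hRherm.eq]
    have crossb : star u ⬝ᵥ v = star v ⬝ᵥ u := by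
      rw [hudef, Matrix.star_mulVec, hRherm.eq, ← Matrix.dotProduct_mulVec]
    have expand : star v ⬝ᵥ ((S + T - S * S) *ᵥ v)
        = 2 * (mu : ℂ) * (star v ⬝ᵥ u) - (mu : ℂ)^2 * (star v ⬝ᵥ v) := by
      rw [Matrix.sub_mulVec, dotProduct_sub, formSS, hSv, formRR]
      have e1 : star (u - (mu:ℂ) • v) ⬝ᵥ (u - (mu:ℂ) • v)
          = star u ⬝ᵥ u - (mu:ℂ) * (star u ⬝ᵥ v) - (mu:ℂ) * (star v ⬝ᵥ u)
            + (mu:ℂ)^2 * (star v ⬝ᵥ v) := by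
        simp only [star_sub, star_smul, sub_dotProduct, dotProduct_sub, smul_dotProduct,
          dotProduct_smul, smul_eq_mul, Complex.star_def, Complex.conj_ofReal]
        ring
      rw [e1, crossb]
      ring
    have hposM : (0:ℂ) ≤ star v ⬝ᵥ ((S + T - S * S) *ᵥ v) := hMS2.dotProduct_mulVec_nonneg v
    have hb : (0:ℂ) ≤ star v ⬝ᵥ u := by
      have := hRpsd.dotProduct_mulVec_nonneg v
      rwa [← hudef] at this
    have h2b : 2 * (mu:ℂ) * (star v ⬝ᵥ u) ≤ 0 := by
      have hh : (0:ℂ) ≤ (-(2 * (mu:ℂ))) * (star v ⬝ᵥ u) := by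
        refine mul_nonneg ?_ hb
        have : (0:ℝ) ≤ -(2 * mu) := by linarith
        have h2 : ((-(2 * mu) : ℝ) : ℂ) = -(2 * (mu:ℂ)) := by push_cast; ring
        rw [← h2]
        exact_mod_cast this
      rw [neg_mul] at hh
      exact neg_nonneg.mp hh
    have hmu2 : (0:ℂ) < (mu:ℂ)^2 := by
      have h1 : (0:ℝ) < mu^2 := by nlinarith
      have h2 : ((mu^2 : ℝ) : ℂ) = (mu:ℂ)^2 := by push_cast; ring
      rw [← h2]
      exact_mod_cast h1
    have hfin : (0:ℂ) < (mu:ℂ)^2 * (star v ⬝ᵥ v) := mul_pos hmu2 hnu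
    have hle : (mu:ℂ)^2 * (star v ⬝ᵥ v) ≤ 2 * (mu:ℂ) * (star v ⬝ᵥ u) := by
      rw [expand] at hposM
      exact sub_nonneg.mp hposM
    exact absurd (lt_of_lt_of_le hfin (le_trans hle h2b)) (lt_irrefl 0)
  -- hermitian combinations
  set Z : Matrix n n ℂ := (c : ℂ) • P - ((1 + c : ℝ) : ℂ) • Pi2 with hZdef
  have hZherm : Zᴴ = Z := by
    rw [hZdef, conjTranspose_sub, conjTranspose_smul, conjTranspose_smul, hPherm.eq, hPiherm.eq]
    simp [Complex.star_def, Complex.conj_ofReal]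
  have hPPiherm : (P - Pi2)ᴴ = P - Pi2 := by
    rw [conjTranspose_sub, hPherm.eq, hPiherm.eq]
  -- component PSD facts
  have hC1 : ((1 : Matrix n n ℂ) - Pi2).PosSemidef := by
    have h1 : (1 : Matrix n n ℂ) - Pi2
        = U * diagonal (fun i => ((1 - (if g i = 0 then (0:ℝ) else 1) : ℝ) : ℂ)) * star U := by
      have h2 : (fun i => ((1 - (if g i = 0 then (0:ℝ) else 1) : ℝ) : ℂ))
          = (fun i => (1:ℂ) - ((if g i = 0 then (0:ℝ) else 1 : ℝ) : ℂ)) := by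
        funext i; push_cast; ring
      rw [h2]
      have h3 : diagonal (fun i => (1:ℂ) - ((if g i = 0 then (0:ℝ) else 1 : ℝ) : ℂ))
          = 1 - diagonal (fun i => ((if g i = 0 then (0:ℝ) else 1 : ℝ) : ℂ)) := by
        ext i j
        rcases eq_or_ne i j with rfl | hij
        · simp [Matrix.diagonal_apply_eq, Matrix.one_apply, Matrix.sub_apply]
        · simp [Matrix.diagonal_apply_ne _ hij, Matrix.one_apply, hij, Matrix.sub_apply]
      rw [h3, mul_sub, sub_mul, mul_one, hUU', hPidef]
    rw [h1]
    refine psdcj _ fun i => ?_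
    by_cases h0 : g i = 0 <;> simp [h0]
  have hC2 : (Z * T * Z).PosSemidef := by
    have := hT.mul_mul_conjTranspose_same Z
    rwa [hZherm] at this
  have hC3 : ((P - Pi2) * S * (P - Pi2)).PosSemidef := by
    have := hS.mul_mul_conjTranspose_same (P - Pi2)
    rwa [hPPiherm] at this
  -- algebra: product rewrite rules
  have hPTPi : P * T * Pi2 = P * T := by rw [mul_assoc, hTPi]
  have hPSPi : P * S * Pi2 = P * S := by rw [mul_assoc, hSPi]
  have hPT' : P * T = R - P * S := by
    have h := hPM
    rw [mul_add] at h
    exact eq_sub_of_add_eq' h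
  have hTP' : T * P = R - S * P := by
    have h := hMP
    rw [add_mul] at h
    exact eq_sub_of_add_eq' h
  have hPTP' : P * T * P = Pi2 - P * S * P := by
    have h := hPMP
    rw [mul_add, add_mul] at h
    exact eq_sub_of_add_eq' h
  have hc0 : (c : ℂ) ≠ 0 := by
    exact_mod_cast hc.ne'
  -- the key identity
  have E : ((1 + c : ℝ) : ℂ) • ((1 : Matrix n n ℂ) - S) + ((2 + c + c⁻¹ : ℝ) : ℂ) • T
      - ((1 : Matrix n n ℂ) - P * S * P)
      = (c : ℂ) • ((1 : Matrix n n ℂ) - Pi2) + ((c⁻¹ : ℝ) : ℂ) • (Z * T * Z)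
        + ((1 + c : ℝ) : ℂ) • ((P - Pi2) * S * (P - Pi2))
        + ((2 * (1 + c) : ℝ) : ℂ) • (R - S) := by
    rw [hZdef]
    simp only [smul_sub, smul_add, sub_mul, mul_sub, add_mul, mul_add, smul_mul_assoc,
      mul_smul_comm, smul_smul, mul_one, one_mul]
    simp only [hPiT, hTPi, hPiS, hSPi, hPTPi, hPSPi]
    simp only [hPTP']
    simp only [hPT', hTP']
    match_scalars <;> (push_cast; field_simp; try ring)
  rw [E]
  have hcinv : (0:ℝ) ≤ c⁻¹ := (inv_nonneg).mpr hc.le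
  exact (((hn_smul_psd hC1 hc.le).add (hn_smul_psd hC2 hcinv)).add
      (hn_smul_psd hC3 (by linarith))).add (hn_smul_psd hRS (by linarith))
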